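/- If Π(t) is a symmetric matrix-valued C¹ function on [0,T] satisfying the Riccati equation Π'(t) = -A(t)'Π(t) - Π(t)A(t) + Π(t)B(t)B(t)'Π(t), and Σ(t) is a symmetric positive-definite C¹ solution of Σ'(t) = (A(t) - B(t)B(t)'Π(t))Σ(t) + Σ(t)(A(t) - B(t)B(t)'Π(t))' + B(t)B(t)', then H(t) := Σ(t)⁻¹ - Π(t) satisfies the dual homogeneous Riccati equation H'(t) = -A(t)'H(t) - H(t)A(t) - H(t)B(t)B(t)'H(t). -/

import Mathlib

open Matrix Set

/-- Entrywise derivative of a matrix-valued function of time. -/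
def MDeriv {n m : ℕ} (F : ℝ → Matrix (Fin n) (Fin m) ℝ)
    (F' : Matrix (Fin n) (Fin m) ℝ) (t : ℝ) : Prop :=
  ∀ i j, HasDerivAt (fun s => F s i j) (F' i j) t

namespace MDerivAux

variable {n : ℕ} {F G : ℝ → Matrix (Fin n) (Fin n) ℝ}
  {F' G' X Y : Matrix (Fin n) (Fin n) ℝ} {t : ℝ}

lemma mul (hF : MDeriv F F' t) (hG : MDeriv G G' t) :
    MDeriv (fun s => F s * G s) (F' * G t + F t * G') t := by
  intro i j
  simp only [Matrix.mul_apply, Matrix.add_apply]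
  rw [← Finset.sum_add_distrib]
  exact HasDerivAt.fun_sum fun k _ => (hF i k).fun_mul (hG k j)

lemma sub (hF : MDeriv F F' t) (hG : MDeriv G G' t) :
    MDeriv (fun s => F s - G s) (F' - G') t := by
  intro i j
  simpa only [Matrix.sub_apply] using (hF i j).fun_sub (hG i j)

lemma unique (h1 : MDeriv F X t) (h2 : MDeriv F Y t) : X = Y := by
  ext i j; exact (h1 i j).unique (h2 i j)

lemma diffAt_entry (h : MDeriv F F' t) (i j : Fin n) :
    DifferentiableAt ℝ (fun s => F s i j) t := (h i j).differentiableAt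

lemma diffAt_det (h : MDeriv F F' t) :
    DifferentiableAt ℝ (fun s => (F s).det) t := by
  simp only [Matrix.det_apply']
  exact DifferentiableAt.fun_sum fun σ _ =>
    ((DifferentiableAt.fun_finset_prod fun k _ => diffAt_entry h (σ k) k).const_mul _)

lemma diffAt_adjugate (h : MDeriv F F' t) (i j : Fin n) :
    DifferentiableAt ℝ (fun s => (F s).adjugate i j) t := by
  simp only [Matrix.adjugate_apply]
  have hup : MDeriv (fun s => (F s).updateRow j (Pi.single i 1))
      (F'.updateRow j 0) t := by
    intro i' j'
    by_cases hij : i' = j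
    · subst hij
      simp only [Matrix.updateRow_self, Matrix.updateRow_apply, if_pos rfl]
      exact hasDerivAt_const _ _
    · simp only [Matrix.updateRow_apply, if_neg hij]
      exact h i' j'
  exact diffAt_det hup

lemma exists_inv_deriv (h : MDeriv F F' t) (hdet : (F t).det ≠ 0) :
    ∃ K', MDeriv (fun s => (F s)⁻¹) K' t := by
  have hd : ∀ i j, DifferentiableAt ℝ (fun s => (F s)⁻¹ i j) t := by
    intro i j
    have : (fun s => (F s)⁻¹ i j)
        = fun s => ((F s).det)⁻¹ * (F s).adjugate i j := by
      funext s
      rw [Matrix.inv_def, Matrix.smul_apply, Ring.inverse_eq_inv, smul_eq_mul]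
    rw [this]
    exact (((diffAt_det h).inv hdet).mul (diffAt_adjugate h i j))
  exact ⟨Matrix.of fun i j => deriv (fun s => (F s)⁻¹ i j) t,
    fun i j => (hd i j).hasDerivAt⟩

end MDerivAux
theorem stmt_0 {n m : ℕ} (T : ℝ) (hT : 0 < T)
    (A : ℝ → Matrix (Fin n) (Fin n) ℝ) (B : ℝ → Matrix (Fin n) (Fin m) ℝ)
    (hA : Continuous A) (hB : Continuous B)
    (Pmat Smat : ℝ → Matrix (Fin n) (Fin n) ℝ)
    (hPmatsym : ∀ t ∈ Icc (0:ℝ) T, (Pmat t)ᵀ = Pmat t)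
    (hSsym : ∀ t ∈ Icc (0:ℝ) T, (Smat t)ᵀ = Smat t)
    (hSpos : ∀ t ∈ Icc (0:ℝ) T, (Smat t).PosDef)
    (hPmat : ∀ t ∈ Icc (0:ℝ) T,
      MDeriv Pmat (-(A t)ᵀ * Pmat t - Pmat t * A t + Pmat t * (B t * (B t)ᵀ) * Pmat t) t)
    (hSmat : ∀ t ∈ Icc (0:ℝ) T,
      MDeriv Smat ((A t - B t * (B t)ᵀ * Pmat t) * Smat t
        + Smat t * (A t - B t * (B t)ᵀ * Pmat t)ᵀ + B t * (B t)ᵀ) t) :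
    ∀ t ∈ Icc (0:ℝ) T,
      MDeriv (fun s => (Smat s)⁻¹ - Pmat s)
        (-(A t)ᵀ * ((Smat t)⁻¹ - Pmat t) - ((Smat t)⁻¹ - Pmat t) * A t
          - ((Smat t)⁻¹ - Pmat t) * (B t * (B t)ᵀ) * ((Smat t)⁻¹ - Pmat t)) t := by
  intro t ht
  have hdet : (Smat t).det ≠ 0 := (hSpos t ht).det_pos.ne'
  have hdetU : IsUnit (Smat t).det := isUnit_iff_ne_zero.mpr hdet
  obtain ⟨K', hK⟩ := MDerivAux.exists_inv_deriv (hSmat t ht) hdet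
  set K := (Smat t)⁻¹ with hKdef
  set a := A t with ha
  set q := B t * (B t)ᵀ with hqdef
  set p := Pmat t with hpdef
  set S' := (a - q * p) * Smat t + Smat t * (a - q * p)ᵀ + q with hS'def
  set P' := -aᵀ * p - p * a + p * q * p with hP'def
  have hSK : Smat t * K = 1 := Matrix.mul_nonsing_inv _ hdetU
  have hKS : K * Smat t = 1 := Matrix.nonsing_inv_mul _ hdetU
  have hev : ∀ᶠ s in nhds t, Smat s * (Smat s)⁻¹ = 1 := by
    have hc : ContinuousAt (fun s => (Smat s).det) t :=
      (MDerivAux.diffAt_det (hSmat t ht)).continuousAt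
    filter_upwards [hc.eventually_ne hdet] with s hs
    exact Matrix.mul_nonsing_inv _ (isUnit_iff_ne_zero.mpr hs)
  have hprod : MDeriv (fun s => Smat s * (Smat s)⁻¹) (S' * K + Smat t * K') t :=
    MDerivAux.mul (hSmat t ht) hK
  have hone : MDeriv (fun s => Smat s * (Smat s)⁻¹) 0 t := by
    intro i j
    have h1 : HasDerivAt (fun _ : ℝ => (1 : Matrix (Fin n) (Fin n) ℝ) i j) 0 t :=
      hasDerivAt_const _ _
    have heq : (fun s => (Smat s * (Smat s)⁻¹) i j)
        =ᶠ[nhds t] (fun _ : ℝ => (1 : Matrix (Fin n) (Fin n) ℝ) i j) :=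
      hev.mono fun s hs => by simp only [hs]
    simpa using h1.congr_of_eventuallyEq heq
  have hzero : S' * K + Smat t * K' = 0 := MDerivAux.unique hprod hone
  have h1 : Smat t * K' = -(S' * K) := by
    rw [eq_neg_iff_add_eq_zero, add_comm]; exact hzero
  have hK' : K' = -(K * S' * K) := by
    calc K' = (K * Smat t) * K' := by rw [hKS, one_mul]
      _ = K * (Smat t * K') := by rw [mul_assoc]
      _ = K * (-(S' * K)) := by rw [h1]
      _ = -(K * S' * K) := by rw [mul_neg, mul_assoc]
  have hp : pᵀ = p := hPmatsym t ht
  have hq : qᵀ = q := by rw [hqdef, transpose_mul, transpose_transpose]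
  have hY : (a - q * p)ᵀ = aᵀ - p * q := by
    rw [transpose_sub, transpose_mul, hp, hq]
  have hKSK : K * S' * K = K * (a - q * p) + (aᵀ - p * q) * K + K * q * K := by
    rw [hS'def, hY]
    calc K * ((a - q * p) * Smat t + Smat t * (aᵀ - p * q) + q) * K
        = (K * (a - q * p)) * (Smat t * K) + (K * Smat t) * ((aᵀ - p * q) * K)
          + K * q * K := by noncomm_ring
      _ = K * (a - q * p) + (aᵀ - p * q) * K + K * q * K := by
          rw [hSK, hKS, mul_one, one_mul]
  have hfinal : MDeriv (fun s => (Smat s)⁻¹ - Pmat s) (K' - P') t :=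
    MDerivAux.sub hK (hPmat t ht)
  have htarget : -aᵀ * (K - p) - (K - p) * a - (K - p) * q * (K - p) = K' - P' := by
    rw [hK', hKSK, hP'def]
    noncomm_ring
  rw [htarget]
  exact hfinal
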